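/- Let V be a finite-dimensional real inner product space equipped additionally with a norm N, and let V = H ⊕ X be an orthogonal direct sum decomposition. Suppose the orthogonal projection P of V onto H satisfies N(P v) ≤ N(v) for all v ∈ V. Then vol_V({v ∈ V : N(v) ≤ 1}) ≤ vol_H({h ∈ H : N(h) ≤ 1}) · vol_X({x ∈ X : N(x) ≤ 2}), where vol_V, vol_H, vol_X denote the Lebesgue measures induced by the respective inner products on V, H and X. -/

import Mathlib

open MeasureTheory

lemma volume_image_linearIsometryEquiv {E F : Type*}
    [NormedAddCommGroup E] [InnerProductSpace ℝ E] [FiniteDimensional ℝ E]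
    [MeasurableSpace E] [BorelSpace E]
    [NormedAddCommGroup F] [InnerProductSpace ℝ F] [FiniteDimensional ℝ F]
    [MeasurableSpace F] [BorelSpace F]
    (f : E ≃ₗᵢ[ℝ] F) (s : Set E) : volume (f '' s) = volume s := by
  have h1 : volume.map f.toMeasurableEquiv (f '' s)
      = volume (f.toMeasurableEquiv ⁻¹' (f '' s)) :=
    MeasurableEquiv.map_apply _ _
  have h2 : volume.map f.toMeasurableEquiv = volume := by
    rw [show (f.toMeasurableEquiv : E → F) = f from rfl]
    exact f.measurePreserving.map_eq
  rw [h2] at h1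
  rw [h1]
  congr 1
  exact Set.preimage_image_eq s f.injective

/-- volume comparison from the Addendum: if `V = H ⊕ Hᗮ`
is an orthogonal decomposition of a finite-dimensional real inner product
space and the orthogonal projection onto `H` is a contraction for an
additional norm `N`, then the `N`-unit ball of `V` has volume at most the
product of the volume of the `N`-unit ball of `H` and the volume of the
`N`-ball of radius `2` in `Hᗮ`, the volumes being the Lebesgue measures
induced by the inner products (expressed here via arbitrary linear isometries
onto Euclidean spaces). -/
theorem stmt_14 (V : Type*) [NormedAddCommGroup V] [InnerProductSpace ℝ V]
    [FiniteDimensional ℝ V]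
    (N : V → ℝ)
    (hN0 : ∀ v, N v = 0 ↔ v = 0)
    (hNsmul : ∀ (r : ℝ) (v : V), N (r • v) = |r| * N v)
    (hNadd : ∀ v w : V, N (v + w) ≤ N v + N w)
    (H : Submodule ℝ V)
    (hP : ∀ v : V, N ((H.orthogonalProjectionOnto v : V)) ≤ N v)
    (dV dH dX : ℕ)
    (eV : V ≃ₗᵢ[ℝ] EuclideanSpace ℝ (Fin dV))
    (eH : H ≃ₗᵢ[ℝ] EuclideanSpace ℝ (Fin dH))
    (eX : Hᗮ ≃ₗᵢ[ℝ] EuclideanSpace ℝ (Fin dX)) :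
    volume (eV '' {v : V | N v ≤ 1}) ≤
      volume (eH '' {h : H | N (h : V) ≤ 1}) *
        volume (eX '' {x : Hᗮ | N (x : V) ≤ 2}) := by
  classical
  borelize V
  set A : Set H := {h : H | N (h : V) ≤ 1} with hA
  set B : Set Hᗮ := {x : Hᗮ | N (x : V) ≤ 2} with hB
  set S : Set V := {v : V | N v ≤ 1} with hS
  -- orthonormal bases of H and Hᗮ
  set m := Module.finrank ℝ H
  set n := Module.finrank ℝ (Hᗮ : Submodule ℝ V)
  let bH : OrthonormalBasis (Fin m) ℝ H := stdOrthonormalBasis ℝ H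
  let bX : OrthonormalBasis (Fin n) ℝ Hᗮ := stdOrthonormalBasis ℝ Hᗮ
  -- the combined orthonormal basis of V
  let w : Fin m ⊕ Fin n → V := Sum.elim (fun i => (bH i : V)) (fun j => (bX j : V))
  have hw_on : Orthonormal ℝ w := by
    rw [orthonormal_iff_ite]
    have honH := bH.orthonormal
    have honX := bX.orthonormal
    rw [orthonormal_iff_ite] at honH honX
    rintro (i | i) (j | j)
    · simpa [w, Submodule.coe_inner] using honH i j
    · simp only [w, Sum.elim_inl, Sum.elim_inr]
      rw [Submodule.inner_right_of_mem_orthogonal (bH i).2 (bX j).2]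
      simp
    · simp only [w, Sum.elim_inl, Sum.elim_inr]
      rw [Submodule.inner_left_of_mem_orthogonal (bH j).2 (bX i).2]
      simp
    · simpa [w, Submodule.coe_inner] using honX i j
  have hw_sp : ⊤ ≤ Submodule.span ℝ (Set.range w) := by
    rw [show Set.range w = (fun h : H => (h : V)) '' Set.range bH ∪
        (fun x : Hᗮ => (x : V)) '' Set.range bX by
      rw [Set.Sum.elim_range, ← Set.range_comp, ← Set.range_comp]; rfl]
    rw [Submodule.span_union]
    have h1 : Submodule.span ℝ ((fun h : H => (h : V)) '' Set.range bH) = H := by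
      rw [show (fun h : H => (h : V)) = H.subtype from rfl, Submodule.span_image,
        show Set.range ⇑bH = Set.range ⇑bH.toBasis by rw [bH.coe_toBasis],
        Module.Basis.span_eq, Submodule.map_subtype_top]
    have h2 : Submodule.span ℝ ((fun x : Hᗮ => (x : V)) '' Set.range bX) = Hᗮ := by
      rw [show (fun x : Hᗮ => (x : V)) = Hᗮ.subtype from rfl, Submodule.span_image,
        show Set.range ⇑bX = Set.range ⇑bX.toBasis by rw [bX.coe_toBasis],
        Module.Basis.span_eq, Submodule.map_subtype_top]
    rw [h1, h2, Submodule.sup_orthogonal_of_hasOrthogonalProjection]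
  let bV : OrthonormalBasis (Fin m ⊕ Fin n) ℝ V := OrthonormalBasis.mk hw_on hw_sp
  have hbV : ∀ i, bV i = w i := fun i => by
    rw [show bV = OrthonormalBasis.mk hw_on hw_sp from rfl, OrthonormalBasis.coe_mk]
  -- the measurable equivalence (h, x) ↦ h + x
  let e1 : (H × Hᗮ) ≃ᵐ (EuclideanSpace ℝ (Fin m) × EuclideanSpace ℝ (Fin n)) :=
    bH.measurableEquiv.prodCongr bX.measurableEquiv
  let e2 : (EuclideanSpace ℝ (Fin m) × EuclideanSpace ℝ (Fin n)) ≃ᵐ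
      ((Fin m → ℝ) × (Fin n → ℝ)) :=
    (MeasurableEquiv.toLp 2 (Fin m → ℝ)).symm.prodCongr (MeasurableEquiv.toLp 2 (Fin n → ℝ)).symm
  let e3 : ((Fin m → ℝ) × (Fin n → ℝ)) ≃ᵐ (Fin m ⊕ Fin n → ℝ) :=
    (MeasurableEquiv.sumPiEquivProdPi (fun _ : Fin m ⊕ Fin n => ℝ)).symm
  let e4 : (Fin m ⊕ Fin n → ℝ) ≃ᵐ EuclideanSpace ℝ (Fin m ⊕ Fin n) :=
    (MeasurableEquiv.toLp 2 (Fin m ⊕ Fin n → ℝ)).symm.symm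
  let e5 : EuclideanSpace ℝ (Fin m ⊕ Fin n) ≃ᵐ V := bV.measurableEquiv.symm
  let Fm : (H × Hᗮ) ≃ᵐ V := (((e1.trans e2).trans e3).trans e4).trans e5
  have hFm : MeasurePreserving Fm
      ((volume : Measure H).prod (volume : Measure Hᗮ)) volume := by
    have mp1 : MeasurePreserving e1 ((volume : Measure H).prod (volume : Measure Hᗮ))
        ((volume : Measure (EuclideanSpace ℝ (Fin m))).prod volume) :=
      bH.measurePreserving_measurableEquiv.prod bX.measurePreserving_measurableEquiv
    have mp2 : MeasurePreserving e2
        ((volume : Measure (EuclideanSpace ℝ (Fin m))).prod volume)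
        ((volume : Measure (Fin m → ℝ)).prod volume) :=
      (EuclideanSpace.volume_preserving_symm_measurableEquiv_toLp (Fin m)).prod
        (EuclideanSpace.volume_preserving_symm_measurableEquiv_toLp (Fin n))
    have mp3 : MeasurePreserving e3 ((volume : Measure (Fin m → ℝ)).prod volume) volume :=
      volume_measurePreserving_sumPiEquivProdPi_symm (fun _ : Fin m ⊕ Fin n => ℝ)
    have mp4 : MeasurePreserving e4 volume volume :=
      (EuclideanSpace.volume_preserving_symm_measurableEquiv_toLp (Fin m ⊕ Fin n)).symm
    have mp5 : MeasurePreserving e5 volume volume :=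
      bV.measurePreserving_measurableEquiv.symm
    exact mp5.comp (mp4.comp (mp3.comp (mp2.comp mp1)))
  -- pointwise formula for Fm
  have hFmval : ∀ (h : H) (x : Hᗮ), Fm (h, x) = (h : V) + (x : V) := by
    intro h x
    have hy : bV.repr ((h : V) + (x : V)) = e4 (e3 (e2 (e1 (h, x)))) := by
      ext i
      rcases i with i | i
      · rw [bV.repr_apply_apply, hbV]
        simp only [w, Sum.elim_inl]
        rw [inner_add_right, Submodule.inner_right_of_mem_orthogonal (bH i).2 x.2, add_zero]
        rw [show (inner ℝ ((bH i : V)) ((h : V)) : ℝ) = inner ℝ (bH i) h from rfl,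
          ← bH.repr_apply_apply]
        rfl
      · rw [bV.repr_apply_apply, hbV]
        simp only [w, Sum.elim_inr]
        rw [inner_add_right, Submodule.inner_left_of_mem_orthogonal h.2 (bX i).2, zero_add]
        rw [show (inner ℝ ((bX i : V)) ((x : V)) : ℝ) = inner ℝ (bX i) x from rfl,
          ← bX.repr_apply_apply]
        rfl
    have h5 : Fm (h, x) = bV.repr.symm (e4 (e3 (e2 (e1 (h, x))))) := rfl
    rw [h5, ← hy, LinearIsometryEquiv.symm_apply_apply]
  -- the unit ball of V is contained in the image of A ×ˢ B
  have hsub : S ⊆ Fm '' (A ×ˢ B) := by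
    intro v hv
    have hv1 : N v ≤ 1 := hv
    refine ⟨(H.orthogonalProjectionOnto v,
      ⟨v - (H.orthogonalProjectionOnto v : V), Submodule.sub_starProjection_mem_orthogonal (K := H) v⟩),
      ⟨?_, ?_⟩, ?_⟩
    · exact le_trans (hP v) hv1
    · have hneg : N (-(H.orthogonalProjectionOnto v : V))
          = N ((H.orthogonalProjectionOnto v : V)) := by
        simpa using hNsmul (-1) ((H.orthogonalProjectionOnto v : V))
      have h1 : N (v - (H.orthogonalProjectionOnto v : V))
          ≤ N v + N ((H.orthogonalProjectionOnto v : V)) := by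
        have := hNadd v (-(H.orthogonalProjectionOnto v : V))
        rw [hneg] at this
        simpa [sub_eq_add_neg] using this
      have h2 := hP v
      show N (v - (H.orthogonalProjectionOnto v : V)) ≤ 2
      linarith
    · rw [hFmval]
      simp
  -- put everything together
  calc volume (eV '' S) = volume S := volume_image_linearIsometryEquiv eV S
    _ ≤ volume (Fm '' (A ×ˢ B)) := measure_mono hsub
    _ = ((volume : Measure H).prod (volume : Measure Hᗮ)) (A ×ˢ B) := by
        have h1 := MeasurableEquiv.map_apply Fm
          (μ := (volume : Measure H).prod (volume : Measure Hᗮ)) (Fm '' (A ×ˢ B))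
        rw [hFm.map_eq] at h1
        rw [h1, Set.preimage_image_eq _ Fm.injective]
    _ = volume A * volume B := Measure.prod_prod A B
    _ = volume (eH '' A) * volume (eX '' B) := by
        rw [volume_image_linearIsometryEquiv eH A, volume_image_linearIsometryEquiv eX B]
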